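/- Let Q be a tableau in Rec-tilde of shape λ/μ (satisfying (R1)–(R5)). Then for each k > 0, the condition Q[k] ≥ 2(ℓ(μ^{(k−1)}) − n) implies Q_{≤ i}[k] ≥ 2(i − n) for all 1 ≤ i ≤ ℓ(μ^{(k−1)}). -/

import Mathlib

/-- `cellOf lam mu i j` : `(i,j)` (matrix coordinates, indexed from 1) is a cell of the
skew shape `λ/μ`. -/
def cellOf (lam mu : ℕ → ℕ) (i j : ℕ) : Prop := 1 ≤ i ∧ mu i < j ∧ j ≤ lam i

/-- `Qcount lam mu Q k = Q[k]` : the number of occurrences of the value `k` in `Q`. -/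
noncomputable def Qcount (lam mu : ℕ → ℕ) (Q : ℕ → ℕ → ℕ) (k : ℕ) : ℕ :=
  Nat.card {p : ℕ × ℕ | cellOf lam mu p.1 p.2 ∧ Q p.1 p.2 = k}

/-- `Qle lam mu Q r k = Q_{≤r}[k]` : the number of occurrences of `k` in rows `1,…,r`. -/
noncomputable def Qle (lam mu : ℕ → ℕ) (Q : ℕ → ℕ → ℕ) (r k : ℕ) : ℕ :=
  Nat.card {p : ℕ × ℕ | cellOf lam mu p.1 p.2 ∧ p.1 ≤ r ∧ Q p.1 p.2 = k}

/-- `lenStage lam mu Q k = ℓ(μ^{(k-1)})` : the number of nonempty rows of the shape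
`D(μ) ∪ {(i,j) ∈ D(λ/μ) : Q(i,j) ≥ k}`. -/
noncomputable def lenStage (lam mu : ℕ → ℕ) (Q : ℕ → ℕ → ℕ) (k : ℕ) : ℕ :=
  Nat.card {i : ℕ | 1 ≤ i ∧ (1 ≤ mu i ∨ ∃ j, cellOf lam mu i j ∧ k ≤ Q i j)}

/-- `IsRecTilde n lam mu Q` : `Q` is a tableau of shape `λ/μ` in the set `Rec-tilde`,
i.e. a filling of the skew cells by positive integers (zero outside) satisfying
(R1) entries strictly decrease along rows left to right;
(R2) entries weakly decrease down columns;
(R3) each value `k ≥ 1` occurs an even number of times;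
(R4) `Q[k] ≥ 2(ℓ(μ^{(k-1)}) − n)` for each `k ≥ 1`;
(R5) `Q_{≤r}[k+1] ≤ Q_{≤r}[k]` for all `r, k ≥ 1`. -/
def IsRecTilde (n : ℕ) (lam mu : ℕ → ℕ) (Q : ℕ → ℕ → ℕ) : Prop :=
  (∀ i j, ¬ cellOf lam mu i j → Q i j = 0) ∧
  (∀ i j, cellOf lam mu i j → 1 ≤ Q i j) ∧
  (∀ i j j', cellOf lam mu i j → cellOf lam mu i j' → j < j' → Q i j' < Q i j) ∧
  (∀ i j, cellOf lam mu i j → cellOf lam mu (i + 1) j → Q (i + 1) j ≤ Q i j) ∧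
  (∀ k, 1 ≤ k → Even (Qcount lam mu Q k)) ∧
  (∀ k, 1 ≤ k → 2 * lenStage lam mu Q k ≤ Qcount lam mu Q k + 2 * n) ∧
  (∀ r k, 1 ≤ k → Qle lam mu Q r (k + 1) ≤ Qle lam mu Q r k)

/-- For `Q ∈ Rec-tilde(λ/μ)` and each `k > 0`, the condition (R4)
`Q[k] ≥ 2(ℓ(μ^{(k-1)}) − n)` implies `Q_{≤i}[k] ≥ 2(i − n)` for all
`1 ≤ i ≤ ℓ(μ^{(k-1)})` (both inequalities stated additively in ℕ). -/
theorem stmt_17 (n : ℕ) (lam mu : ℕ → ℕ) (Q : ℕ → ℕ → ℕ)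
    (hlam : ∀ i j, 1 ≤ i → i ≤ j → lam j ≤ lam i)
    (hlam2n : ∀ i, 2 * n < i → lam i = 0)
    (hmu : ∀ i j, 1 ≤ i → i ≤ j → mu j ≤ mu i)
    (hmun : ∀ i, n < i → mu i = 0)
    (hsub : ∀ i, mu i ≤ lam i)
    (hQ : IsRecTilde n lam mu Q) :
    ∀ k, 1 ≤ k →
      (2 * lenStage lam mu Q k ≤ Qcount lam mu Q k + 2 * n) →
      ∀ i, 1 ≤ i → i ≤ lenStage lam mu Q k →
        2 * i ≤ Qle lam mu Q i k + 2 * n := by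
  obtain ⟨h0, h1, hR1, hR2, hR3, hR4, hR5⟩ := hQ
  intro k hk hR4k i hi1 hil
  classical
  set S : Set ℕ := {r : ℕ | 1 ≤ r ∧ (1 ≤ mu r ∨ ∃ j, cellOf lam mu r j ∧ k ≤ Q r j)} with hSdef
  set A : Set (ℕ × ℕ) := {p : ℕ × ℕ | cellOf lam mu p.1 p.2 ∧ Q p.1 p.2 = k} with hAdef
  set B : Set (ℕ × ℕ) := {p : ℕ × ℕ | cellOf lam mu p.1 p.2 ∧ p.1 ≤ i ∧ Q p.1 p.2 = k} with hBdef
  -- cells are bounded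
  have hcellb : ∀ r j, cellOf lam mu r j → 1 ≤ r ∧ r ≤ 2 * n ∧ 1 ≤ j ∧ j ≤ lam 1 := by
    intro r j ⟨hr1, hmj, hjl⟩
    have hr2n : r ≤ 2 * n := by
      by_contra h
      have := hlam2n r (by omega)
      omega
    have : lam r ≤ lam 1 := hlam 1 r le_rfl hr1
    exact ⟨hr1, hr2n, by omega, by omega⟩
  have hAfin : A.Finite := by
    apply Set.Finite.subset ((Set.finite_Icc 1 (2*n)).prod (Set.finite_Icc 1 (lam 1)))
    rintro ⟨r, j⟩ ⟨hc, -⟩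
    obtain ⟨a, b, c, d⟩ := hcellb r j hc
    exact ⟨Set.mem_Icc.2 ⟨a, b⟩, Set.mem_Icc.2 ⟨c, d⟩⟩
  have hSfin : S.Finite := by
    apply Set.Finite.subset (Set.finite_Icc 1 (2*n))
    rintro r ⟨hr1, hr2⟩
    rcases hr2 with h | ⟨j, hc, -⟩
    · have : r ≤ n := by
        by_contra h'
        have := hmun r (by omega)
        omega
      exact Set.mem_Icc.2 ⟨hr1, by omega⟩
    · obtain ⟨a, b, -, -⟩ := hcellb r j hc
      exact Set.mem_Icc.2 ⟨a, b⟩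
  -- downward closedness of S
  have hstep : ∀ r, 1 ≤ r → (r + 1) ∈ S → r ∈ S := by
    rintro r hr ⟨-, h | ⟨j, ⟨hc1, hc2, hc3⟩, hkQ⟩⟩
    · exact ⟨hr, Or.inl (le_trans h (hmu r (r+1) hr (by omega)))⟩
    · by_cases hj : j ≤ mu r
      · exact ⟨hr, Or.inl (by omega)⟩
      · have hcr : cellOf lam mu r j :=
          ⟨hr, by omega, le_trans hc3 (hlam r (r+1) hr (by omega))⟩
        exact ⟨hr, Or.inr ⟨j, hcr, le_trans hkQ (hR2 r j hcr ⟨hc1, hc2, hc3⟩)⟩⟩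
  have hdc : ∀ d r, 1 ≤ r → (r + d) ∈ S → r ∈ S := by
    intro d
    induction d with
    | zero => intro r hr h; exact h
    | succ d ih =>
      intro r hr h
      exact ih r hr (hstep (r + d) (by omega) (by rw [show r + d + 1 = r + (d+1) by ring]; exact h))
  -- lenStage = S.ncard etc.
  have hlS : lenStage lam mu Q k = S.ncard := by
    rw [lenStage, Nat.card_coe_set_eq]
  have hQcA : Qcount lam mu Q k = A.ncard := by
    rw [Qcount, Nat.card_coe_set_eq]
  have hQlB : Qle lam mu Q i k = B.ncard := by
    rw [Qle, Nat.card_coe_set_eq]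
  rw [hlS] at hil hR4k
  rw [hQcA] at hR4k
  rw [hQlB]
  -- Icc 1 i ⊆ S
  have hIccS : Set.Icc 1 i ⊆ S := by
    intro r hr
    rw [Set.mem_Icc] at hr
    by_contra hrS
    have hsub' : S ⊆ Set.Ico 1 r := by
      intro x hx
      rw [Set.mem_Ico]
      refine ⟨hx.1, ?_⟩
      by_contra hxr
      exact hrS (hdc (x - r) r hr.1 (by rw [show r + (x - r) = x by omega]; exact hx))
    have hle : S.ncard ≤ (Set.Ico 1 r).ncard := Set.ncard_le_ncard hsub' (Set.finite_Ico 1 r)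
    have : (Set.Ico 1 r).ncard = r - 1 := by
      rw [Set.ncard_eq_toFinset_card', Set.toFinset_Ico, Nat.card_Ico]
    omega
  -- B ⊆ A
  have hBA : B ⊆ A := by rintro p ⟨hc, -, hq⟩; exact ⟨hc, hq⟩
  -- (A \ B) injects into S \ Icc 1 i via first coordinate
  have hmaps : ∀ p ∈ A \ B, p.1 ∈ S \ Set.Icc 1 i := by
    rintro p ⟨⟨hc, hq⟩, hnb⟩
    have hpi : ¬ p.1 ≤ i := fun h => hnb ⟨hc, h, hq⟩
    refine ⟨⟨hc.1, Or.inr ⟨p.2, hc, le_of_eq hq.symm⟩⟩, ?_⟩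
    rw [Set.mem_Icc]
    omega
  have hinj : Set.InjOn (fun p : ℕ × ℕ => p.1) (A \ B) := by
    rintro p ⟨⟨hcp, hqp⟩, -⟩ q ⟨⟨hcq, hqq⟩, -⟩ hpq
    simp only at hpq
    have hcq' : cellOf lam mu p.1 q.2 := hpq ▸ hcq
    have hqq' : Q p.1 q.2 = k := by rw [hpq]; exact hqq
    have h22 : p.2 = q.2 := by
      rcases lt_trichotomy p.2 q.2 with h | h | h
      · have := hR1 p.1 p.2 q.2 hcp hcq' h; omega
      · exact h
      · have := hR1 p.1 q.2 p.2 hcq' hcp h; omega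
    exact Prod.ext hpq h22
  have h2 : (A \ B).ncard ≤ (S \ Set.Icc 1 i).ncard :=
    Set.ncard_le_ncard_of_injOn _ hmaps hinj hSfin.diff
  have h3 : (S \ Set.Icc 1 i).ncard + (Set.Icc 1 i).ncard = S.ncard :=
    Set.ncard_diff_add_ncard_of_subset hIccS hSfin
  have h4 : (Set.Icc 1 i).ncard = i := by
    rw [Set.ncard_eq_toFinset_card', Set.toFinset_Icc, Nat.card_Icc]; omega
  have h1' : (A \ B).ncard + B.ncard = A.ncard :=
    Set.ncard_diff_add_ncard_of_subset hBA hAfin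
  omega
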